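/- Let P be a Markov kernel on a measurable space Z with invariant probability measure π, let Δ ⊆ Z be measurable, and let ψ : Z → ℝ^d be measurable with all components in L²(π). Define Pg(x) := ∫ g(y) P(x, dy) for scalar g and Pψ componentwise; set R := ∫ ψψᵀ dπ, Σ := ∫ [∫ (ψ(y) − Pψ(x))(ψ(y) − Pψ(x))ᵀ P(x, dy)] π(dx), and M^Δ := ∫_{Δᶜ} (Pψ)(Pψ)ᵀ dπ. If there is ϱ ∈ [0,1) with Σ + M^Δ ⪰ (1 − ϱ) R, then for every θ ∈ ℝ^d the function g = θᵀψ satisfies ∫ (1_Δ · Pg)² dπ ≤ ϱ ∫ g² dπ; i.e., the killed kernel P_Δ(x, A) = 1_Δ(x)P(x, A) is a strict L²(π)-contraction on the subspace H = {θᵀψ : θ ∈ ℝ^d}. -/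

import Mathlib

open MeasureTheory ProbabilityTheory


lemma aux_mul_integrable {α : Type*} [MeasurableSpace α] {μ : Measure α} {f g : α → ℝ}
    (hf : MemLp f 2 μ) (hg : MemLp g 2 μ) : Integrable (fun x => f x * g x) μ := by
  have hmaj : Integrable (fun x => (1/2 : ℝ) * (f x ^ 2 + g x ^ 2)) μ :=
    (hf.integrable_sq.add hg.integrable_sq).const_mul (1/2 : ℝ)
  refine Integrable.mono' hmaj (hf.1.mul hg.1) (Filter.Eventually.of_forall fun x => ?_)
  rw [Real.norm_eq_abs, abs_mul]
  nlinarith [sq_nonneg (|f x| - |g x|), sq_abs (f x), sq_abs (g x)]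

lemma aux_sq_integral_le {α : Type*} [MeasurableSpace α] {ν : Measure α} [IsProbabilityMeasure ν]
    {f : α → ℝ} (h1 : Integrable f ν) (h2 : Integrable (fun x => f x ^ 2) ν) :
    (∫ x, f x ∂ν) ^ 2 ≤ ∫ x, f x ^ 2 ∂ν := by
  set c := ∫ x, f x ∂ν with hc
  have h0 : 0 ≤ ∫ x, (f x - c) ^ 2 ∂ν := integral_nonneg fun x => sq_nonneg _
  have he : (fun x => (f x - c) ^ 2) = fun x => (f x ^ 2 - (2 * c) * f x) + c ^ 2 :=
    funext fun x => by ring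
  have hi1 : Integrable (fun x => f x ^ 2 - (2 * c) * f x) ν := h2.sub (h1.const_mul (2 * c))
  rw [he, integral_add hi1 (integrable_const _),
    integral_sub h2 (h1.const_mul (2 * c)), integral_const_mul, integral_const] at h0
  simp only [measure_univ, ENNReal.toReal_one, probReal_univ, one_smul, ← hc] at h0
  nlinarith [h0]

lemma aux_quad_integral {α : Type*} [MeasurableSpace α] {μ : Measure α} {d : ℕ}
    (θ : Fin d → ℝ) (f : α → Fin d → ℝ)
    (hint : ∀ i j, Integrable (fun x => f x i * f x j) μ) :
    ∑ i, ∑ j, θ i * θ j * ∫ x, f x i * f x j ∂μ = ∫ x, (∑ i, θ i * f x i) ^ 2 ∂μ := by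
  have h1 : ∀ i j : Fin d, θ i * θ j * ∫ x, f x i * f x j ∂μ
      = ∫ x, θ i * θ j * (f x i * f x j) ∂μ := fun i j => (integral_const_mul _ _).symm
  simp_rw [h1]
  have h2 : ∀ i : Fin d, ∑ j, ∫ x, θ i * θ j * (f x i * f x j) ∂μ
      = ∫ x, ∑ j, θ i * θ j * (f x i * f x j) ∂μ := fun i =>
    (integral_finset_sum _ fun j _ => (hint i j).const_mul _).symm
  simp_rw [h2]
  rw [← integral_finset_sum _ (fun i _ => integrable_finset_sum _ fun j _ => (hint i j).const_mul _)]
  congr 1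
  funext x
  rw [sq, Finset.sum_mul_sum]
  exact Finset.sum_congr rfl fun i _ => Finset.sum_congr rfl fun j _ => by ring

lemma aux_quad_form {d : ℕ} (θ : Fin d → ℝ) (A : Matrix (Fin d) (Fin d) ℝ) :
    dotProduct (star θ) (A.mulVec θ) = ∑ i, ∑ j, θ i * θ j * A i j := by
  simp only [star_trivial, dotProduct, Matrix.mulVec, Finset.mul_sum]
  exact Finset.sum_congr rfl fun i _ => Finset.sum_congr rfl fun j _ => by ring

/-- If `Σ + M^Δ ⪰ (1−ϱ)R` in the positive-semidefinite order, then the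
killed kernel `P_Δ(x,A) = 1_Δ(x)P(x,A)` is a strict `L²(π)`-contraction (constant `ϱ`)
on the span of the features `ψ`. -/
theorem stmt_11
    {Z : Type*} [MeasurableSpace Z]
    (P : Kernel Z Z) [IsMarkovKernel P]
    (π : Measure Z) [IsProbabilityMeasure π]
    (hinv : ∀ A : Set Z, MeasurableSet A → ∫⁻ x, P x A ∂π = π A)
    (Δ : Set Z) (hΔ : MeasurableSet Δ)
    {d : ℕ}
    (ψ : Z → Fin d → ℝ) (hψ : Measurable ψ)
    (hL2 : ∀ i, Integrable (fun x => (ψ x i) ^ 2) π)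
    (Pψ : Z → Fin d → ℝ)
    (hPψ : ∀ x i, Pψ x i = ∫ y, ψ y i ∂(P x))
    (R Sig MΔ : Matrix (Fin d) (Fin d) ℝ)
    (hR : ∀ i j, R i j = ∫ x, ψ x i * ψ x j ∂π)
    (hSig : ∀ i j,
      Sig i j = ∫ x, (∫ y, (ψ y i - Pψ x i) * (ψ y j - Pψ x j) ∂(P x)) ∂π)
    (hMΔ : ∀ i j, MΔ i j = ∫ x in Δᶜ, Pψ x i * Pψ x j ∂π)
    (ϱ : ℝ) (hϱ0 : 0 ≤ ϱ) (hϱ1 : ϱ < 1)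
    (hPSD : (Sig + MΔ - (1 - ϱ) • R).PosSemidef) :
    ∀ θ : Fin d → ℝ,
      ∫ x, (Δ.indicator (fun x' => ∫ y, (∑ i, θ i * ψ y i) ∂(P x')) x) ^ 2 ∂π ≤
        ϱ * ∫ x, (∑ i, θ i * ψ x i) ^ 2 ∂π := by
  intro θ
  have hψi : ∀ i, Measurable fun x => ψ x i := fun i => (measurable_pi_apply i).comp hψ
  have hψiL2 : ∀ i, MemLp (fun x => ψ x i) 2 π := fun i =>
    (memLp_two_iff_integrable_sq (hψi i).aestronglyMeasurable).2 (hL2 i)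
  set ρ : Measure (Z × Z) := π.compProd P with hρdef
  have hmap : Measure.map Prod.snd ρ = π := by
    ext s hs
    rw [Measure.map_apply measurable_snd hs, hρdef, Measure.compProd_apply (measurable_snd hs)]
    exact hinv s hs
  -- the transfer lemma
  have hcomp : ∀ f : Z → ℝ, Measurable f → Integrable f π →
      (∀ᵐ x ∂π, Integrable f (P x)) ∧ Integrable (fun x => ∫ y, f y ∂(P x)) π ∧
        (∫ x, ∫ y, f y ∂(P x) ∂π = ∫ x, f x ∂π) := by
    intro f hf hfi
    have hsm2 : AEStronglyMeasurable (fun z : Z × Z => f z.2) ρ :=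
      (hf.comp measurable_snd).aestronglyMeasurable
    have hFρ : Integrable (fun z : Z × Z => f z.2) ρ := by
      have := (integrable_map_measure (f := Prod.snd) (g := f)
        (by rw [hmap]; exact hf.aestronglyMeasurable) measurable_snd.aemeasurable).1
        (by rwa [hmap])
      exact this
    have hiff := (Measure.integrable_compProd_iff hsm2).1 hFρ
    have hsm : StronglyMeasurable fun x => ∫ y, f y ∂(P x) :=
      StronglyMeasurable.integral_kernel_prod_right' (κ := P)
        (f := fun z : Z × Z => f z.2) (hf.comp measurable_snd).stronglyMeasurable
    refine ⟨hiff.1, ?_, ?_⟩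
    · exact Integrable.mono' hiff.2 hsm.aestronglyMeasurable
        (Filter.Eventually.of_forall fun x => norm_integral_le_integral_norm _)
    · have h1 : ∫ z, (fun z : Z × Z => f z.2) z ∂ρ = ∫ x, ∫ y, f y ∂(P x) ∂π :=
        Measure.integral_compProd hFρ
      have h2 : ∫ z, (fun z : Z × Z => f z.2) z ∂ρ = ∫ x, f x ∂π := by
        rw [← hmap]
        exact (integral_map measurable_snd.aemeasurable
          (by rw [hmap]; exact hf.aestronglyMeasurable)).symm
      rw [← h1, h2]
  -- products of features
  have hψψ : ∀ i j, Integrable (fun x => ψ x i * ψ x j) π := fun i j =>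
    aux_mul_integrable (hψiL2 i) (hψiL2 j)
  have hcompψ := fun i => hcomp _ (hψi i) ((hψiL2 i).integrable one_le_two)
  have hcompψψ := fun i j => hcomp (fun x => ψ x i * ψ x j) ((hψi i).mul (hψi j)) (hψψ i j)
  have hcompψ2 := fun i => hcomp _ ((hψi i).pow measurable_const) (hL2 i)
  have haeint : ∀ᵐ x ∂π, (∀ i, Integrable (fun y => ψ y i) (P x)) ∧
      (∀ i j, Integrable (fun y => ψ y i * ψ y j) (P x)) ∧
      (∀ i, Integrable (fun y => ψ y i ^ 2) (P x)) := by
    refine Filter.Eventually.and (ae_all_iff.2 fun i => (hcompψ i).1)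
      (Filter.Eventually.and (ae_all_iff.2 fun i => ae_all_iff.2 fun j => (hcompψψ i j).1)
        (ae_all_iff.2 fun i => (hcompψ2 i).1))
  -- measurability of Pψ
  have hPψm : ∀ i, Measurable fun x => Pψ x i := by
    intro i
    have : (fun x => Pψ x i) = fun x => ∫ y, ψ y i ∂(P x) := funext fun x => hPψ x i
    rw [this]
    exact (StronglyMeasurable.integral_kernel_prod_right' (κ := P)
      (f := fun z : Z × Z => ψ z.2 i) ((hψi i).comp measurable_snd).stronglyMeasurable).measurable
  -- Pψ i is in L²(π), by Jensen
  have hPψL2 : ∀ i, MemLp (fun x => Pψ x i) 2 π := by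
    intro i
    refine (memLp_two_iff_integrable_sq (hPψm i).aestronglyMeasurable).2 ?_
    refine Integrable.mono' (hcompψ2 i).2.1
      (((hPψm i).pow measurable_const).aestronglyMeasurable) ?_
    filter_upwards [haeint] with x hx
    rw [Real.norm_eq_abs, abs_of_nonneg (sq_nonneg _), hPψ x i]
    exact aux_sq_integral_le (hx.1 i) (hx.2.2 i)
  have hPP : ∀ i j, Integrable (fun x => Pψ x i * Pψ x j) π := fun i j =>
    aux_mul_integrable (hPψL2 i) (hPψL2 j)
  -- Pg = ∑ θ i * Pψ i, a.e.
  have hPg_ae : ∀ᵐ x ∂π, (∫ y, ∑ i, θ i * ψ y i ∂(P x)) = ∑ i, θ i * Pψ x i := by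
    filter_upwards [haeint] with x hx
    rw [integral_finset_sum _ fun i _ => (hx.1 i).const_mul (θ i)]
    exact Finset.sum_congr rfl fun i _ => by rw [integral_const_mul, hPψ x i]
  -- Sigma entries
  have hSig' : ∀ i j, Sig i j = R i j - ∫ x, Pψ x i * Pψ x j ∂π := by
    intro i j
    have hT : ∀ᵐ x ∂π, (∫ y, (ψ y i - Pψ x i) * (ψ y j - Pψ x j) ∂(P x))
        = (∫ y, ψ y i * ψ y j ∂(P x)) - Pψ x i * Pψ x j := by
      filter_upwards [haeint] with x hx
      have he : (fun y => (ψ y i - Pψ x i) * (ψ y j - Pψ x j))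
          = fun y => (ψ y i * ψ y j - (Pψ x i * ψ y j + Pψ x j * ψ y i)) + Pψ x i * Pψ x j :=
        funext fun y => by ring
      have hiadd : Integrable (fun y => Pψ x i * ψ y j + Pψ x j * ψ y i) (P x) :=
        ((hx.1 j).const_mul _).add ((hx.1 i).const_mul _)
      have hisub : Integrable (fun y => ψ y i * ψ y j - (Pψ x i * ψ y j + Pψ x j * ψ y i)) (P x) :=
        (hx.2.1 i j).sub hiadd
      rw [he, integral_add hisub (integrable_const _),
        integral_sub (hx.2.1 i j) hiadd,
        integral_add ((hx.1 j).const_mul _) ((hx.1 i).const_mul _),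
        integral_const_mul, integral_const_mul, integral_const]
      simp only [measure_univ, ENNReal.toReal_one, probReal_univ, one_smul]
      rw [← hPψ x i, ← hPψ x j]
      ring
    rw [hSig i j, integral_congr_ae hT, hR i j]
    have hSint : Integrable (fun x => ∫ y, ψ y i * ψ y j ∂(P x)) π := (hcompψψ i j).2.1
    rw [integral_sub hSint (hPP i j), (hcompψψ i j).2.2]
  -- quadratic-form identities
  have hq := hPSD.dotProduct_mulVec_nonneg θ
  rw [Matrix.sub_mulVec, Matrix.add_mulVec, Matrix.smul_mulVec] at hq
  simp only [dotProduct_sub, dotProduct_add, dotProduct_smul,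
    smul_eq_mul] at hq
  rw [aux_quad_form θ Sig, aux_quad_form θ MΔ, aux_quad_form θ R] at hq
  have idR : ∑ i, ∑ j, θ i * θ j * R i j = ∫ x, (∑ i, θ i * ψ x i) ^ 2 ∂π := by
    simp_rw [hR]
    exact aux_quad_integral θ ψ hψψ
  have idN : ∑ i, ∑ j, θ i * θ j * ∫ x, Pψ x i * Pψ x j ∂π
      = ∫ x, (∑ i, θ i * Pψ x i) ^ 2 ∂π := aux_quad_integral θ Pψ hPP
  have idM : ∑ i, ∑ j, θ i * θ j * MΔ i j = ∫ x in Δᶜ, (∑ i, θ i * Pψ x i) ^ 2 ∂π := by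
    simp_rw [hMΔ]
    exact aux_quad_integral θ Pψ fun i j => (hPP i j).integrableOn
  have idS : ∑ i, ∑ j, θ i * θ j * Sig i j
      = (∑ i, ∑ j, θ i * θ j * R i j) - ∑ i, ∑ j, θ i * θ j * ∫ x, Pψ x i * Pψ x j ∂π := by
    simp_rw [hSig', mul_sub, Finset.sum_sub_distrib]
  -- the function h = ∑ θ i Pψ i is in L²
  have hh2 : Integrable (fun x => (∑ i, θ i * Pψ x i) ^ 2) π := by
    have hhL2 : MemLp (fun x => ∑ i, θ i * Pψ x i) 2 π := by
      refine memLp_finset_sum _ fun i _ => ?_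
      exact (hPψL2 i).const_mul (θ i)
    exact hhL2.integrable_sq
  -- rewrite the goal
  have hgoal1 : (fun x => (Δ.indicator (fun x' => ∫ y, (∑ i, θ i * ψ y i) ∂(P x')) x) ^ 2)
      = Δ.indicator (fun x => (∫ y, (∑ i, θ i * ψ y i) ∂(P x)) ^ 2) := by
    funext x
    by_cases hx : x ∈ Δ
    · simp [Set.indicator_of_mem hx]
    · simp [Set.indicator_of_notMem hx]
  rw [hgoal1, integral_indicator hΔ]
  have hgoal2 : ∫ x in Δ, (∫ y, (∑ i, θ i * ψ y i) ∂(P x)) ^ 2 ∂π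
      = ∫ x in Δ, (∑ i, θ i * Pψ x i) ^ 2 ∂π := by
    refine integral_congr_ae ?_
    filter_upwards [ae_restrict_of_ae hPg_ae] with x hx
    rw [hx]
  rw [hgoal2]
  have hsplit : ∫ x in Δ, (∑ i, θ i * Pψ x i) ^ 2 ∂π
      = (∫ x, (∑ i, θ i * Pψ x i) ^ 2 ∂π) - ∫ x in Δᶜ, (∑ i, θ i * Pψ x i) ^ 2 ∂π := by
    rw [← integral_add_compl hΔ hh2]; ring
  rw [hsplit, ← idR]
  rw [← idN, ← idM]
  linarith [hq, idS]
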